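/- arXiv:1907.13593 — 4 statements merged into one kernel-verified Lean document; each statement's English description precedes it below -/
import Mathlib

section
/- Let Δ = {x_0,...,x_n} ⊂ ℝⁿ be the vertex set of a unit n-simplex centered at z, and let Ω = ⋂_{i=0}^n closedBall(x_i, 1). Then Ω ⊆ closedBall(z, r_n) where r_n = √(n/(2n+2)), and Ω ∩ sphere(z, r_n) = Δ. -/
open Metric Finset
open scoped RealInnerProductSpace

variable {n : ℕ}

lemma aux_sum (x : Fin (n+1) → EuclideanSpace ℝ (Fin n)) (z : EuclideanSpace ℝ (Fin n))
    (hz : z = (n + 1 : ℝ)⁻¹ • ∑ i, x i) :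
    ∑ i, (x i - z) = 0 := by
  have hn : ((n:ℝ)+1) ≠ 0 := by positivity
  rw [Finset.sum_sub_distrib, Finset.sum_const, Finset.card_univ, Fintype.card_fin, hz]
  rw [← Nat.cast_smul_eq_nsmul ℝ, smul_smul]
  push_cast
  rw [mul_inv_cancel₀ hn, one_smul, sub_self]

lemma aux_gram (x : Fin (n+1) → EuclideanSpace ℝ (Fin n))
    (h : ∀ i j, i ≠ j → dist (x i) (x j) = 1)
    (z : EuclideanSpace ℝ (Fin n)) (hz : z = (n + 1 : ℝ)⁻¹ • ∑ i, x i) :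
    ∀ i j, ⟪x i - z, x j - z⟫ = if i = j then (n:ℝ)/(2*n+2) else -1/(2*n+2) := by
  set v : Fin (n+1) → EuclideanSpace ℝ (Fin n) := fun i => x i - z with hv
  have hs : ∑ i, v i = 0 := aux_sum x z hz
  set a : Fin (n+1) → ℝ := fun i => ‖v i‖^2 with ha
  have hin : ∀ i j, i ≠ j → ⟪v i, v j⟫ = (a i + a j - 1)/2 := by
    intro i j hij
    have hd : ‖v i - v j‖^2 = 1 := by
      have e : v i - v j = x i - x j := by simp only [hv]; abel
      rw [e, ← dist_eq_norm, h i j hij, one_pow]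
    rw [@norm_sub_sq_real] at hd
    simp only [ha]
    linarith
  have hzero : ∀ i, ∑ j, ⟪v i, v j⟫ = (0:ℝ) := by
    intro i
    rw [← inner_sum, hs, inner_zero_right]
  set T : ℝ := ∑ i, a i with hT
  have key : ∀ i, ((n:ℝ)+1) * a i + T = n := by
    intro i
    have h0 := hzero i
    rw [← Finset.sum_erase_add _ _ (Finset.mem_univ i)] at h0
    rw [Finset.sum_congr rfl (fun j hj => hin i j
      (by simp at hj; exact fun e => hj e.symm))] at h0
    have hc : (Finset.univ.erase i).card = n := by
      rw [Finset.card_erase_of_mem (Finset.mem_univ i), Finset.card_univ, Fintype.card_fin]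
      omega
    have h1 : ∑ j ∈ Finset.univ.erase i, ((a i + a j - 1)/2)
        = (n:ℝ) * ((a i - 1)/2) + (T - a i)/2 := by
      have e1 : ∀ j, (a i + a j - 1)/2 = (a i - 1)/2 + a j/2 := fun j => by ring
      simp_rw [e1]
      rw [Finset.sum_add_distrib, Finset.sum_const, hc]
      have e2 : ∑ j ∈ Finset.univ.erase i, a j = T - a i := by
        have h3 := Finset.sum_erase_add Finset.univ a (Finset.mem_univ i)
        rw [← hT] at h3
        linarith
      rw [← Finset.sum_div, e2, nsmul_eq_mul]
    have h2 : ⟪v i, v i⟫ = a i := real_inner_self_eq_norm_sq (v i)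
    rw [h1, h2] at h0
    linarith
  have hTn : T = n/2 := by
    have hsumkey : ∑ i : Fin (n+1), (((n:ℝ)+1) * a i + T) = ∑ i : Fin (n+1), (n:ℝ) :=
      Finset.sum_congr rfl (fun i _ => key i)
    rw [Finset.sum_add_distrib, ← Finset.mul_sum, ← hT, Finset.sum_const, Finset.sum_const,
      Finset.card_univ, Fintype.card_fin] at hsumkey
    simp only [nsmul_eq_mul] at hsumkey
    have : ((n:ℝ)+1) * T + ((n:ℝ)+1) * T = ((n:ℝ)+1) * n := by
      push_cast at hsumkey ⊢
      linarith
    have hn : ((n:ℝ)+1) ≠ 0 := by positivity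
    field_simp at this
    nlinarith [this]
  have hai : ∀ i, a i = n/(2*n+2) := by
    intro i
    have := key i
    have hn : ((n:ℝ)+1) ≠ 0 := by positivity
    rw [hTn] at this
    field_simp
    linarith
  intro i j
  by_cases hij : i = j
  · subst hij
    simp only [if_pos rfl]
    rw [real_inner_self_eq_norm_sq]
    exact hai i
  · rw [if_neg hij, hin i j hij, hai i, hai j]
    have hn : (2*(n:ℝ)+2) ≠ 0 := by positivity
    field_simp
    ring

lemma aux_repr (x : Fin (n+1) → EuclideanSpace ℝ (Fin n))
    (h : ∀ i j, i ≠ j → dist (x i) (x j) = 1)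
    (z : EuclideanSpace ℝ (Fin n)) (hz : z = (n + 1 : ℝ)⁻¹ • ∑ i, x i)
    (w : EuclideanSpace ℝ (Fin n)) :
    ∑ i, ⟪w, x i - z⟫ • (x i - z) = (2:ℝ)⁻¹ • w := by
  set v : Fin (n+1) → EuclideanSpace ℝ (Fin n) := fun i => x i - z with hv
  have g : ∀ i j, ⟪v i, v j⟫ = if i = j then (n:ℝ)/(2*n+2) else -1/(2*n+2) :=
    aux_gram x h z hz
  have hs : ∑ i, v i = 0 := aux_sum x z hz
  have hden : (2*(n:ℝ)+2) ≠ 0 := by positivity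
  -- linear independence of the succ family
  have hli : LinearIndependent ℝ (fun i : Fin n => v i.succ) := by
    rw [Fintype.linearIndependent_iff]
    intro c hc
    have h0 : ⟪∑ i, c i • v i.succ, ∑ j, c j • v j.succ⟫ = (0:ℝ) := by
      rw [hc, inner_zero_left]
    have hexp : ⟪∑ i, c i • v i.succ, ∑ j, c j • v j.succ⟫
        = (∑ i, c i)^2 * (-1/(2*(n:ℝ)+2)) + (∑ i, (c i)^2) * (((n:ℝ)+1)/(2*n+2)) := by
      rw [sum_inner]
      have e1 : ∀ i, ⟪c i • v i.succ, ∑ j, c j • v j.succ⟫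
          = c i * (∑ j, c j) * (-1/(2*(n:ℝ)+2)) + (c i)^2 * (((n:ℝ)+1)/(2*n+2)) := by
        intro i
        rw [real_inner_smul_left, inner_sum]
        have e2 : ∀ j, ⟪v i.succ, c j • v j.succ⟫
            = c j * (-1/(2*(n:ℝ)+2)) + (if i = j then c j * (((n:ℝ)+1)/(2*n+2)) else 0) := by
          intro j
          rw [real_inner_smul_right, g]
          by_cases hij : i = j
          · simp only [hij, Fin.succ_inj, if_pos rfl, ↓reduceIte]
            field_simp
            ring
          · have : i.succ ≠ j.succ := fun e => hij (Fin.succ_inj.mp e)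
            simp only [if_neg this, if_neg hij]
            ring
        simp_rw [e2]
        rw [Finset.sum_add_distrib, Finset.sum_ite_eq, if_pos (Finset.mem_univ i),
          ← Finset.sum_mul, Finset.mul_sum]
        rw [← Finset.mul_sum]
        ring
      simp_rw [e1]
      rw [Finset.sum_add_distrib]
      rw [← Finset.sum_mul, ← Finset.sum_mul, ← Finset.sum_mul]
      ring
    rw [hexp] at h0
    have hcs : (∑ i, c i)^2 ≤ (n:ℝ) * ∑ i, (c i)^2 := by
      have := sq_sum_le_card_mul_sum_sq (s := (Finset.univ : Finset (Fin n))) (f := c)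
      simpa using this
    have hq0 : (0:ℝ) ≤ ∑ i, (c i)^2 := Finset.sum_nonneg fun i _ => sq_nonneg _
    have hq : ∑ i, (c i)^2 ≤ 0 := by
      field_simp at h0
      nlinarith [hcs, h0]
    have hqz : ∑ i, (c i)^2 = 0 := le_antisymm hq hq0
    intro i
    have := (Finset.sum_eq_zero_iff_of_nonneg (fun j _ => sq_nonneg (c j))).mp hqz i (Finset.mem_univ i)
    exact pow_eq_zero_iff (by norm_num) |>.mp this
  have hsp : Submodule.span ℝ (Set.range v) = ⊤ := by
    have h1 : Submodule.span ℝ (Set.range (fun i : Fin n => v i.succ))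
        ≤ Submodule.span ℝ (Set.range v) :=
      Submodule.span_mono (by rintro _ ⟨i, rfl⟩; exact ⟨i.succ, rfl⟩)
    apply Submodule.eq_top_of_finrank_eq
    rw [finrank_euclideanSpace_fin]
    refine le_antisymm (le_trans (Submodule.finrank_le _) (by rw [finrank_euclideanSpace_fin])) ?_
    calc (n:ℕ) = Module.finrank ℝ (Submodule.span ℝ (Set.range (fun i : Fin n => v i.succ))) := by
          rw [finrank_span_eq_card hli, Fintype.card_fin]
      _ ≤ _ := Submodule.finrank_mono h1
  have hw : w ∈ Submodule.span ℝ (Set.range v) := hsp ▸ Submodule.mem_top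
  obtain ⟨c, hc⟩ := (Submodule.mem_span_range_iff_exists_fun ℝ).mp hw
  have hwi : ∀ i, ⟪w, v i⟫
      = c i * (((n:ℝ)+1)/(2*n+2)) + (∑ j, c j) * (-1/(2*(n:ℝ)+2)) := by
    intro i
    rw [← hc, sum_inner]
    have e2 : ∀ j, ⟪c j • v j, v i⟫
        = c j * (-1/(2*(n:ℝ)+2)) + (if i = j then c j * (((n:ℝ)+1)/(2*n+2)) else 0) := by
      intro j
      rw [real_inner_smul_left, g]
      by_cases hij : i = j
      · simp only [hij, if_pos rfl, ↓reduceIte]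
        field_simp
        ring
      · have hji : j ≠ i := fun e => hij e.symm
        simp only [if_neg hji, if_neg hij]
        ring
    simp_rw [e2]
    rw [Finset.sum_add_distrib, Finset.sum_ite_eq, if_pos (Finset.mem_univ i),
      ← Finset.sum_mul]
    ring
  have hsplit : ∑ i, ⟪w, v i⟫ • v i
      = ∑ i, ((((n:ℝ)+1)/(2*n+2)) • (c i • v i)
          + ((∑ j, c j) * (-1/(2*(n:ℝ)+2))) • v i) := by
    refine Finset.sum_congr rfl fun i _ => ?_
    rw [hwi i]
    module
  rw [hsplit, Finset.sum_add_distrib, ← Finset.smul_sum, ← Finset.smul_sum, hc, hs,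
    smul_zero, add_zero]
  have e3 : ((n:ℝ)+1)/(2*n+2) = 2⁻¹ := by
    field_simp
  rw [e3]

theorem reuleaux_simplex (n : ℕ) (x : Fin (n + 1) → EuclideanSpace ℝ (Fin n))
    (h : ∀ i j, i ≠ j → dist (x i) (x j) = 1)
    (z : EuclideanSpace ℝ (Fin n)) (hz : z = (n + 1 : ℝ)⁻¹ • ∑ i, x i) :
    (⋂ i, closedBall (x i) 1) ⊆ closedBall z (Real.sqrt (n / (2 * n + 2))) ∧
      (⋂ i, closedBall (x i) 1) ∩ sphere z (Real.sqrt (n / (2 * n + 2))) = Set.range x := by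
  set v : Fin (n+1) → EuclideanSpace ℝ (Fin n) := fun i => x i - z with hv
  have g : ∀ i j, ⟪v i, v j⟫ = if i = j then (n:ℝ)/(2*n+2) else -1/(2*n+2) :=
    aux_gram x h z hz
  have hs : ∑ i, v i = 0 := aux_sum x z hz
  have hden : (2*(n:ℝ)+2) ≠ 0 := by positivity
  have hn1 : ((n:ℝ)+1) ≠ 0 := by positivity
  have hR0 : (0:ℝ) ≤ (n:ℝ)/(2*n+2) := by positivity
  have hone : 2*((n:ℝ)/(2*n+2)) + ((n:ℝ)+1)⁻¹ = 1 := by field_simp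
  have hvnorm : ∀ i, ‖v i‖^2 = (n:ℝ)/(2*n+2) := by
    intro i
    rw [← real_inner_self_eq_norm_sq, g i i, if_pos rfl]
  have hnorm2 : ∀ u : EuclideanSpace ℝ (Fin n), ‖u‖^2 = 2 * ∑ i, ⟪u, v i⟫^2 := by
    intro u
    have hr := aux_repr x h z hz u
    have e : ⟪u, (2:ℝ)⁻¹ • u⟫ = ∑ i, (⟪u, v i⟫:ℝ)^2 := by
      rw [← hr, inner_sum]
      refine Finset.sum_congr rfl fun i _ => ?_
      rw [real_inner_smul_right]
      ring
    rw [real_inner_smul_right, real_inner_self_eq_norm_sq] at e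
    linarith
  -- key facts for any point of the intersection
  have key : ∀ y ∈ (⋂ i, closedBall (x i) 1),
      ‖y - z‖^2 ≤ (n:ℝ)/(2*n+2) ∧ (‖y - z‖^2 = (n:ℝ)/(2*n+2) → ∃ j, y = x j) := by
    intro y hy
    set w : EuclideanSpace ℝ (Fin n) := y - z with hw
    set lam : Fin (n+1) → ℝ := fun i => 2*⟪w, v i⟫ + ((n:ℝ)+1)⁻¹ with hlam
    have hmem : ∀ i, ‖w - v i‖ ≤ 1 := by
      intro i
      have := Set.mem_iInter.mp hy i
      rw [mem_closedBall, dist_eq_norm] at this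
      have e : w - v i = y - x i := by simp only [hw, hv]; abel
      rwa [e]
    have hlow : ∀ i, ‖w‖^2 - (n:ℝ)/(2*n+2) ≤ lam i := by
      intro i
      have h1 : ‖w - v i‖^2 ≤ 1 := by
        have := hmem i
        nlinarith [norm_nonneg (w - v i)]
      rw [@norm_sub_sq_real, hvnorm i] at h1
      have e : (n:ℝ)/(2*n+2) - 1 + ((n:ℝ)+1)⁻¹ = -((n:ℝ)/(2*n+2)) := by
        field_simp
        ring
      simp only [hlam]
      linarith
    have hsumlam : ∑ i, lam i = 1 := by
      have h1 : ∑ i, (⟪w, v i⟫:ℝ) = 0 := by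
        rw [← inner_sum, hs, inner_zero_right]
      simp only [hlam]
      rw [Finset.sum_add_distrib, ← Finset.mul_sum, h1, Finset.sum_const, Finset.card_univ,
        Fintype.card_fin, nsmul_eq_mul, mul_zero, zero_add]
      push_cast
      rw [mul_inv_cancel₀ hn1]
    have hS : ∑ i, (lam i)^2 = 2*‖w‖^2 + ((n:ℝ)+1)⁻¹ := by
      have h1 : ∑ i, (⟪w, v i⟫:ℝ) = 0 := by
        rw [← inner_sum, hs, inner_zero_right]
      have e : ∀ i, (lam i)^2
          = 4*(⟪w, v i⟫:ℝ)^2 + (4*((n:ℝ)+1)⁻¹)*⟪w, v i⟫ + (((n:ℝ)+1)⁻¹)^2 := by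
        intro i; simp only [hlam]; ring
      rw [Finset.sum_congr rfl fun i _ => e i]
      rw [Finset.sum_add_distrib, Finset.sum_add_distrib, ← Finset.mul_sum, ← Finset.mul_sum,
        h1, mul_zero, add_zero, Finset.sum_const, Finset.card_univ, Fintype.card_fin,
        nsmul_eq_mul, hnorm2 w]
      push_cast
      field_simp
      ring
    have hbound : ‖w‖^2 ≤ (n:ℝ)/(2*n+2) := by
      by_contra hlt
      push_neg at hlt
      obtain ⟨t, ht⟩ : ∃ t : ℝ, t = ‖w‖^2 - (n:ℝ)/(2*n+2) := ⟨_, rfl⟩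
      have htpos : 0 < t := by rw [ht]; linarith
      have hlam_t : ∀ i, t ≤ lam i := fun i => by rw [ht]; exact hlow i
      have hlam_pos : ∀ i, 0 ≤ lam i := fun i => le_trans htpos.le (hlam_t i)
      have hmax : ∀ j, lam j ≤ 1 - (n:ℝ)*t := by
        intro j
        have hcard : ((Finset.univ.erase j).card : ℝ) = n := by
          rw [Finset.card_erase_of_mem (Finset.mem_univ j), Finset.card_univ, Fintype.card_fin]
          push_cast
          ring
        have h2 : ((Finset.univ.erase j).card : ℝ) * t ≤ ∑ i ∈ Finset.univ.erase j, lam i := by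
          have := Finset.card_nsmul_le_sum (Finset.univ.erase j) lam t (fun i _ => hlam_t i)
          rwa [nsmul_eq_mul] at this
        have h3 : ∑ i ∈ Finset.univ.erase j, lam i + lam j = 1 := by
          rw [Finset.sum_erase_add _ _ (Finset.mem_univ j)]; exact hsumlam
        rw [hcard] at h2
        linarith
      have hSle : ∑ i, (lam i)^2 ≤ 1 - (n:ℝ)*t := by
        calc ∑ i, (lam i)^2 ≤ ∑ i, lam i * (1 - (n:ℝ)*t) := by
              refine Finset.sum_le_sum fun i _ => ?_
              rw [sq]
              exact mul_le_mul_of_nonneg_left (hmax i) (hlam_pos i)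
          _ = 1 - (n:ℝ)*t := by rw [← Finset.sum_mul, hsumlam, one_mul]
      have hnt : 0 ≤ (n:ℝ)*t := mul_nonneg (Nat.cast_nonneg n) htpos.le
      rw [hS] at hSle
      have : ‖w‖^2 = t + (n:ℝ)/(2*n+2) := by rw [ht]; ring
      rw [this] at hSle
      linarith [hone, hSle, hnt, htpos]
    refine ⟨hbound, ?_⟩
    intro heq
    -- equality case
    have hlam_pos : ∀ i, 0 ≤ lam i := by
      intro i
      have h5 := hlow i
      rw [heq, sub_self] at h5
      exact h5
    have hle1 : ∀ i, lam i ≤ 1 := by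
      intro i
      rw [← hsumlam]
      exact Finset.single_le_sum (fun k _ => hlam_pos k) (Finset.mem_univ i)
    have hSeq : ∑ i, (lam i)^2 = 1 := by rw [hS, heq]; linarith
    have heach : ∀ i, lam i * (1 - lam i) = 0 := by
      have hzero : ∑ i, lam i * (1 - lam i) = 0 := by
        have : ∀ i, lam i * (1 - lam i) = lam i - (lam i)^2 := fun i => by ring
        rw [Finset.sum_congr rfl fun i _ => this i, Finset.sum_sub_distrib, hsumlam, hSeq,
          sub_self]
      intro i
      exact (Finset.sum_eq_zero_iff_of_nonneg
        (fun k _ => mul_nonneg (hlam_pos k) (by linarith [hle1 k]))).mp hzero i (Finset.mem_univ i)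
    have h01 : ∀ i, lam i = 0 ∨ lam i = 1 := by
      intro i
      rcases mul_eq_zero.mp (heach i) with h' | h'
      · exact Or.inl h'
      · exact Or.inr (by linarith)
    have hex : ∃ j, lam j = 1 := by
      by_contra hno
      push_neg at hno
      have : ∀ i, lam i = 0 := fun i => (h01 i).resolve_right (hno i)
      have : ∑ i, lam i = 0 := Finset.sum_eq_zero fun i _ => this i
      rw [hsumlam] at this
      norm_num at this
    obtain ⟨j, hj⟩ := hex
    refine ⟨j, ?_⟩
    have hothers : ∀ i, i ≠ j → lam i = 0 := by
      intro i hij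
      rcases h01 i with h' | h'
      · exact h'
      · exfalso
        have hsub : lam i + lam j ≤ ∑ k, lam k := by
          have := Finset.sum_le_sum_of_subset_of_nonneg
            (Finset.subset_univ ({i, j} : Finset (Fin (n+1)))) (fun k _ _ => hlam_pos k)
          rwa [Finset.sum_pair hij] at this
        rw [hsumlam, h', hj] at hsub
        norm_num at hsub
    have hall : ∀ i, ⟪w - v j, v i⟫ = (0:ℝ) := by
      intro i
      rw [inner_sub_left, g j i]
      have hwv : (⟪w, v i⟫:ℝ) = (lam i - ((n:ℝ)+1)⁻¹)/2 := by simp only [hlam]; ring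
      by_cases hij : i = j
      · subst hij
        rw [if_pos rfl, hwv, hj]
        field_simp
        ring
      · rw [if_neg (fun e => hij e.symm), hwv, hothers i hij]
        field_simp
        ring
    have hwz : ‖w - v j‖^2 = 0 := by
      rw [hnorm2 (w - v j)]
      rw [Finset.sum_congr rfl fun i _ => by rw [hall i]]
      simp
    have : w - v j = 0 := by
      have := pow_eq_zero_iff (n := 2) (by norm_num) |>.mp hwz
      exact norm_eq_zero.mp this
    have : y - x j = 0 := by
      have e : w - v j = y - x j := by simp only [hw, hv]; abel
      rwa [e] at this
    exact sub_eq_zero.mp this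
  have hxmem : ∀ j, x j ∈ ⋂ i, closedBall (x i) 1 := by
    intro j
    rw [Set.mem_iInter]
    intro i
    rw [mem_closedBall]
    by_cases hij : j = i
    · rw [hij, dist_self]; norm_num
    · rw [h j i hij]
  have hxsph : ∀ j, dist (x j) z = Real.sqrt ((n:ℝ)/(2*n+2)) := by
    intro j
    rw [dist_eq_norm]
    have e : ‖x j - z‖^2 = (n:ℝ)/(2*n+2) := hvnorm j
    rw [← e, Real.sqrt_sq (norm_nonneg _)]
  constructor
  · intro y hy
    rw [mem_closedBall, dist_eq_norm]
    have hb := (key y hy).1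
    have h0 : ‖y - z‖ = Real.sqrt (‖y - z‖^2) := (Real.sqrt_sq (norm_nonneg _)).symm
    rw [h0]
    exact Real.sqrt_le_sqrt hb
  · apply Set.Subset.antisymm
    · rintro y ⟨hy1, hy2⟩
      rw [mem_sphere, dist_eq_norm] at hy2
      have heq : ‖y - z‖^2 = (n:ℝ)/(2*n+2) := by
        rw [hy2, Real.sq_sqrt hR0]
      obtain ⟨j, hj⟩ := (key y hy1).2 heq
      exact ⟨j, hj.symm⟩
    · rintro _ ⟨j, rfl⟩
      exact ⟨hxmem j, hxsph j⟩
end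

section
/- Let x_0,...,x_n be the vertices of a unit n-simplex in ℝⁿ and Ω = ⋂_i closedBall(x_i, 1). Then the function V(x) = -∑_{i=0}^n |x - x_i|^β, for β ≥ 2, attains its minimum over Ω exactly on the set {x_0,...,x_n}. -/
open Metric

open Finset
open scoped RealInnerProductSpace

lemma exists_bary {n : ℕ} (x : Fin (n + 1) → EuclideanSpace ℝ (Fin n))
    (h : ∀ i j, i ≠ j → dist (x i) (x j) = 1)
    (w : EuclideanSpace ℝ (Fin n)) :
    ∃ t : Fin (n + 1) → ℝ, ∑ i, t i = 1 ∧ w = ∑ i, t i • x i := by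
  have hd : ∀ a b, ‖x a - x b‖ = if a = b then 0 else 1 := by
    intro a b
    rw [← dist_eq_norm]
    split_ifs with hab
    · simp [hab]
    · exact h a b hab
  rcases Nat.eq_zero_or_pos n with hn | hn
  · subst hn
    refine ⟨fun _ => 1, by simp, ?_⟩
    exact Subsingleton.elim _ _
  · have hne : Nonempty (Fin n) := ⟨⟨0, hn⟩⟩
    set v : Fin n → EuclideanSpace ℝ (Fin n) := fun i => x i.succ - x 0 with hv
    have hgram : ∀ i k : Fin n, ⟪v i, v k⟫ = if i = k then 1 else 1/2 := by
      intro i k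
      rw [real_inner_eq_norm_mul_self_add_norm_mul_self_sub_norm_sub_mul_self_div_two]
      have he : v i - v k = x i.succ - x k.succ := by simp [hv]
      rw [he, hd, hd, hd]
      have h1 : i.succ ≠ 0 := Fin.succ_ne_zero i
      have h2 : k.succ ≠ 0 := Fin.succ_ne_zero k
      rcases eq_or_ne i k with rfl | hik
      · simp [h1]
      · simp [h1, h2, hik, Fin.succ_inj.not.mpr hik]
    have hli : LinearIndependent ℝ v := by
      rw [Fintype.linearIndependent_iff]
      intro g hg
      have h0 : (0:ℝ) = ⟪∑ i, g i • v i, ∑ k, g k • v k⟫ := by rw [hg]; simp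
      have hc : ⟪∑ i, g i • v i, ∑ k, g k • v k⟫
          = ∑ i, ∑ k, g i * (g k * ⟪v i, v k⟫) := by
        simp only [sum_inner, real_inner_smul_left, inner_sum, real_inner_smul_right]
        exact Finset.sum_congr rfl fun i _ => Finset.sum_congr rfl fun k _ => by
          rw [real_inner_comm]
      have hsummand : ∀ i k : Fin n, g i * (g k * ⟪v i, v k⟫)
          = g i * g k / 2 + (if k = i then g i * g k / 2 else 0) := by
        intro i k
        rw [hgram]
        rcases eq_or_ne i k with rfl | hik
        · simp
        · simp [hik, hik.symm]; ring
      have hc2 : ⟪∑ i, g i • v i, ∑ k, g k • v k⟫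
          = (∑ i, g i) * (∑ i, g i) / 2 + (∑ i, g i ^ 2) / 2 := by
        rw [hc]
        simp only [hsummand, Finset.sum_add_distrib, Finset.sum_ite_eq', Finset.mem_univ,
          if_true]
        have e1 : ∑ i : Fin n, ∑ k : Fin n, g i * g k / 2
            = (∑ i : Fin n, g i) * (∑ i : Fin n, g i) / 2 := by
          rw [Finset.sum_mul, Finset.sum_div]
          exact Finset.sum_congr rfl fun i _ => by rw [Finset.mul_sum, Finset.sum_div]
        have e2 : ∑ i : Fin n, g i * g i / 2 = (∑ i : Fin n, g i ^ 2) / 2 := by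
          rw [Finset.sum_div]
          exact Finset.sum_congr rfl fun i _ => by ring
        rw [e1, e2]
      have hP : ∑ i, g i ^ 2 = 0 := by
        have h1 : (0:ℝ) ≤ ∑ i, g i ^ 2 := Finset.sum_nonneg fun i _ => sq_nonneg _
        have h2 := h0.trans hc2
        nlinarith [sq_nonneg (∑ i, g i)]
      intro i
      have := (Finset.sum_eq_zero_iff_of_nonneg (fun i _ => sq_nonneg (g i))).mp hP i
        (Finset.mem_univ i)
      exact pow_eq_zero_iff (by norm_num) |>.mp this
    have hcard : Fintype.card (Fin n) = Module.finrank ℝ (EuclideanSpace ℝ (Fin n)) := by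
      simp [finrank_euclideanSpace_fin]
    let b := basisOfLinearIndependentOfCardEqFinrank hli hcard
    have hb : ⇑b = v := coe_basisOfLinearIndependentOfCardEqFinrank hli hcard
    set a : Fin n → ℝ := fun i => b.repr (w - x 0) i with ha
    have hrepr : w - x 0 = ∑ i, a i • v i := by
      have hs := b.sum_repr (w - x 0)
      rw [hb] at hs
      exact hs.symm
    have hsplit : ∑ i : Fin n, a i • v i
        = ∑ i : Fin n, a i • x i.succ - (∑ i : Fin n, a i) • x 0 := by
      rw [Finset.sum_smul, ← Finset.sum_sub_distrib]
      refine Finset.sum_congr rfl fun i _ => ?_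
      simp only [hv]
      exact smul_sub _ _ _
    refine ⟨Fin.cons (1 - ∑ i, a i) a, ?_, ?_⟩
    · rw [Fin.sum_cons]
      ring
    · rw [Fin.sum_univ_succ]
      simp only [Fin.cons_zero, Fin.cons_succ]
      have hw : w = x 0 + (∑ i : Fin n, a i • x i.succ - (∑ i : Fin n, a i) • x 0) := by
        rw [← hsplit, ← hrepr]
        abel
      rw [hw, sub_smul, one_smul]
      abel

lemma dist_sq_bary {n : ℕ} (x : Fin (n + 1) → EuclideanSpace ℝ (Fin n))
    (h : ∀ i j, i ≠ j → dist (x i) (x j) = 1)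
    (w : EuclideanSpace ℝ (Fin n)) (t : Fin (n + 1) → ℝ)
    (ht : ∑ i, t i = 1) (hw : w = ∑ i, t i • x i) :
    ∀ j, dist w (x j) ^ 2 = (1 + ∑ i, t i ^ 2) / 2 - t j := by
  have hd : ∀ a b, ‖x a - x b‖ = if a = b then 0 else 1 := by
    intro a b
    rw [← dist_eq_norm]
    split_ifs with hab
    · simp [hab]
    · exact h a b hab
  set S : Fin (n + 1) → ℝ := fun j => dist w (x j) ^ 2 with hS
  have hwj : ∀ j, w - x j = ∑ i, t i • (x i - x j) := by
    intro j
    have : ∑ i, t i • (x i - x j) = ∑ i, t i • x i - (∑ i, t i) • x j := by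
      rw [Finset.sum_smul, ← Finset.sum_sub_distrib]
      exact Finset.sum_congr rfl fun i _ => smul_sub _ _ _
    rw [this, ht, one_smul, ← hw]
  have hpol : ∀ j i, ⟪w - x j, x i - x j⟫
      = (S j + (if i = j then 0 else 1) - S i) / 2 := by
    intro j i
    rw [real_inner_eq_norm_mul_self_add_norm_mul_self_sub_norm_sub_mul_self_div_two]
    have he : w - x j - (x i - x j) = w - x i := by abel
    rw [he, hd]
    have h1 : ∀ a, ‖w - x a‖ = dist w (x a) := fun a => (dist_eq_norm _ _).symm
    rw [h1, h1, hS]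
    split_ifs with hij <;> simp <;> ring
  have hsum : ∀ j, ∑ i, t i * (if i = j then (0:ℝ) else 1) = 1 - t j := by
    intro j
    have : ∀ i, t i * (if i = j then (0:ℝ) else 1)
        = t i - (if i = j then t i else 0) := by
      intro i; split_ifs <;> ring
    simp only [this, Finset.sum_sub_distrib, ht, Finset.sum_ite_eq', Finset.mem_univ,
      if_true]
  have hSj : ∀ j, S j = 1 - t j - ∑ i, t i * S i := by
    intro j
    have e1 : S j = ⟪w - x j, w - x j⟫ := by
      rw [real_inner_self_eq_norm_sq, ← dist_eq_norm]
    have e2 : ∑ i, t i * ⟪w - x j, x i - x j⟫ = ⟪w - x j, w - x j⟫ := by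
      calc ∑ i, t i * ⟪w - x j, x i - x j⟫
          = ∑ i, ⟪w - x j, t i • (x i - x j)⟫ :=
            Finset.sum_congr rfl fun i _ => (real_inner_smul_right _ _ _).symm
        _ = ⟪w - x j, ∑ i, t i • (x i - x j)⟫ := (inner_sum _ _ _).symm
        _ = ⟪w - x j, w - x j⟫ := by rw [← hwj j]
    have e3 : ∑ i, t i * ⟪w - x j, x i - x j⟫
        = (∑ i, t i * S j + ∑ i, t i * (if i = j then (0:ℝ) else 1)
            - ∑ i, t i * S i) / 2 := by
      simp only [hpol]
      have hr : ∀ i : Fin (n + 1), t i * (((S j + if i = j then (0:ℝ) else 1) - S i) / 2)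
          = (t i * S j + t i * (if i = j then (0:ℝ) else 1) - t i * S i) / 2 :=
        fun i => by ring
      rw [Finset.sum_congr rfl fun i _ => hr i, ← Finset.sum_div,
        Finset.sum_sub_distrib, Finset.sum_add_distrib]
    rw [hsum j, ← Finset.sum_mul, ht, one_mul] at e3
    have := e1.trans (e2.symm.trans e3)
    linarith
  have hA : ∑ i, t i * S i = (1 - ∑ i, t i ^ 2) / 2 := by
    have : ∑ i, t i * S i = ∑ i, (t i - t i ^ 2 - t i * ∑ k, t k * S k) := by
      exact Finset.sum_congr rfl fun i _ => by rw [hSj i]; ring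
    rw [Finset.sum_sub_distrib, Finset.sum_sub_distrib, ht, ← Finset.sum_mul, ht,
      one_mul] at this
    linarith
  intro j
  have := hSj j
  rw [hA] at this
  rw [show dist w (x j) ^ 2 = S j from rfl, this]
  ring

lemma key_ineq {n : ℕ} (x : Fin (n + 1) → EuclideanSpace ℝ (Fin n))
    (h : ∀ i j, i ≠ j → dist (x i) (x j) = 1)
    (w : EuclideanSpace ℝ (Fin n)) (hw : ∀ i, dist w (x i) ≤ 1) :
    ∑ i, dist w (x i) ^ 2 ≤ n ∧
      ((∑ i, dist w (x i) ^ 2 = n) → ∃ j, w = x j) := by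
  obtain ⟨t, ht, hwt⟩ := exists_bary x h w
  have hid := dist_sq_bary x h w t ht hwt
  set P : ℝ := ∑ i, t i ^ 2 with hP
  -- constraint from being in the balls
  have hcon : ∀ j, (P - 1) / 2 ≤ t j := by
    intro j
    have h1 : dist w (x j) ^ 2 ≤ 1 := by
      have := hw j
      nlinarith [dist_nonneg (x := w) (y := x j)]
    rw [hid j] at h1
    linarith
  have hP1 : P ≤ 1 := by
    by_contra hc
    push_neg at hc
    have hpos : ∀ j, 0 < t j := fun j => lt_of_lt_of_le (by linarith) (hcon j)
    have hle1 : ∀ j, t j ≤ 1 := by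
      intro j
      calc t j ≤ ∑ i, t i :=
            Finset.single_le_sum (fun i _ => (hpos i).le) (Finset.mem_univ j)
        _ = 1 := ht
    have : P ≤ 1 := by
      calc P = ∑ i, t i ^ 2 := hP
        _ ≤ ∑ i, t i := Finset.sum_le_sum fun i _ => by nlinarith [hpos i, hle1 i]
        _ = 1 := ht
    linarith
  have hsum : ∑ i, dist w (x i) ^ 2 = (n + 1) * ((1 + P) / 2) - 1 := by
    calc ∑ i, dist w (x i) ^ 2 = ∑ i : Fin (n + 1), ((1 + P) / 2 - t i) :=
          Finset.sum_congr rfl fun i _ => hid i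
      _ = (n + 1) * ((1 + P) / 2) - 1 := by
          rw [Finset.sum_sub_distrib, ht, Finset.sum_const, Finset.card_univ,
            Fintype.card_fin, nsmul_eq_mul]
          push_cast
          ring
  constructor
  · rw [hsum]
    nlinarith [Nat.cast_nonneg (α := ℝ) n]
  · intro heq
    rw [hsum] at heq
    have hPe : P = 1 := by
      have hn : (0:ℝ) < n + 1 := by positivity
      nlinarith
    have ht0 : ∀ j, 0 ≤ t j := fun j => le_trans (by linarith) (hcon j)
    have ht1 : ∀ j, t j ≤ 1 := by
      intro j
      calc t j ≤ ∑ i, t i :=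
            Finset.single_le_sum (fun i _ => ht0 i) (Finset.mem_univ j)
        _ = 1 := ht
    have hzero : ∑ i, (t i - t i ^ 2) = 0 := by
      rw [Finset.sum_sub_distrib, ht, ← hP, hPe]
      ring
    have hterm : ∀ j, t j - t j ^ 2 = 0 := by
      intro j
      exact (Finset.sum_eq_zero_iff_of_nonneg
        (fun i _ => by nlinarith [ht0 i, ht1 i])).mp hzero j (Finset.mem_univ j)
    obtain ⟨j, hj⟩ : ∃ j, t j ≠ 0 := by
      by_contra hc
      push_neg at hc
      rw [Finset.sum_eq_zero (fun i _ => hc i)] at ht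
      norm_num at ht
    have htj : t j = 1 := by
      have := hterm j
      have h2 : t j * (1 - t j) = 0 := by nlinarith
      rcases mul_eq_zero.mp h2 with h3 | h3
      · exact absurd h3 hj
      · linarith
    refine ⟨j, ?_⟩
    have : dist w (x j) ^ 2 = 0 := by
      rw [hid j, htj, hPe]
      ring
    have := pow_eq_zero_iff (n := 2) (by norm_num) |>.mp this
    exact dist_eq_zero.mp this

theorem simplex_potential_minimized_at_vertices (n : ℕ) (β : ℝ) (hβ : 2 ≤ β)
    (x : Fin (n + 1) → EuclideanSpace ℝ (Fin n))
    (h : ∀ i j, i ≠ j → dist (x i) (x j) = 1) :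
    {y | y ∈ (⋂ i, closedBall (x i) 1) ∧
        ∀ w ∈ (⋂ i, closedBall (x i) 1),
          -(∑ i, dist y (x i) ^ β) ≤ -(∑ i, dist w (x i) ^ β)}
      = Set.range x := by
  have hmem : ∀ y : EuclideanSpace ℝ (Fin n),
      y ∈ (⋂ i, closedBall (x i) 1) ↔ ∀ i, dist y (x i) ≤ 1 := by
    intro y
    simp [Set.mem_iInter, mem_closedBall]
  -- each vertex is in Ω
  have hvmem : ∀ j, (x j) ∈ (⋂ i, closedBall (x i) 1) := by
    intro j
    rw [hmem]
    intro i
    rcases eq_or_ne j i with rfl | hji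
    · simp
    · rw [h j i hji]
  -- value at a vertex
  have hvert : ∀ j, ∑ i, dist (x j) (x i) ^ β = n := by
    intro j
    have he : ∀ i, dist (x j) (x i) ^ β = if i = j then 0 else 1 := by
      intro i
      rcases eq_or_ne i j with rfl | hij
      · simp [Real.zero_rpow (by linarith : β ≠ 0)]
      · rw [h j i (Ne.symm hij), Real.one_rpow, if_neg hij]
    rw [Finset.sum_congr rfl fun i _ => he i]
    have : ∀ i : Fin (n + 1), (if i = j then (0:ℝ) else 1)
        = 1 - (if i = j then (1:ℝ) else 0) := fun i => by split_ifs <;> ring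
    rw [Finset.sum_congr rfl fun i _ => this i, Finset.sum_sub_distrib,
      Finset.sum_const, Finset.card_univ, Fintype.card_fin, nsmul_eq_mul, mul_one,
      Finset.sum_ite_eq', if_pos (Finset.mem_univ j)]
    push_cast
    ring
  -- β-power sum vs square sum
  have hcmp : ∀ w : EuclideanSpace ℝ (Fin n), (∀ i, dist w (x i) ≤ 1) →
      ∑ i, dist w (x i) ^ β ≤ ∑ i, dist w (x i) ^ 2 := by
    intro w hw
    refine Finset.sum_le_sum fun i _ => ?_
    rcases eq_or_lt_of_le (dist_nonneg (x := w) (y := x i)) with hd0 | hd0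
    · rw [← hd0, Real.zero_rpow (by linarith : β ≠ 0)]
      norm_num
    · calc dist w (x i) ^ β ≤ dist w (x i) ^ (2:ℝ) :=
            Real.rpow_le_rpow_of_exponent_ge hd0 (hw i) hβ
        _ = dist w (x i) ^ 2 := by
            rw [show ((2:ℝ)) = ((2:ℕ):ℝ) by norm_num, Real.rpow_natCast]
  have hub : ∀ w ∈ (⋂ i, closedBall (x i) 1), ∑ i, dist w (x i) ^ β ≤ n := by
    intro w hwΩ
    have hw := (hmem w).mp hwΩ
    exact le_trans (hcmp w hw) (key_ineq x h w hw).1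
  ext y
  simp only [Set.mem_setOf_eq, Set.mem_range]
  constructor
  · rintro ⟨hyΩ, hmin⟩
    have hy := (hmem y).mp hyΩ
    have h0 := hmin (x 0) (hvmem 0)
    rw [hvert 0] at h0
    have hge : (n:ℝ) ≤ ∑ i, dist y (x i) ^ β := by linarith
    have hsq : ∑ i, dist y (x i) ^ 2 = n :=
      le_antisymm (key_ineq x h y hy).1 (le_trans hge (hcmp y hy))
    obtain ⟨j, hj⟩ := (key_ineq x h y hy).2 hsq
    exact ⟨j, hj.symm⟩
  · rintro ⟨j, rfl⟩
    refine ⟨hvmem j, fun w hwΩ => ?_⟩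
    rw [hvert j]
    have := hub w hwΩ
    linarith
end

section
/- Let x_0, ..., x_n be the vertices of a unit n-simplex in ℝⁿ. Then the matrix A_0 = ∑_{j=1}^n (x_0 - x_j) ⊗ (x_0 - x_j) (note |x_0 - x_j| = 1) satisfies A_0 ≥ (1/min{n,2}) Id as quadratic forms; equivalently, ⟨v, A_0 v⟩ ≥ |v|²/min{n,2} for all v ∈ ℝⁿ. -/
open scoped RealInnerProductSpace

theorem simplex_operator_lower_bound (n : ℕ)
    (x : Fin (n + 1) → EuclideanSpace ℝ (Fin n))
    (h : ∀ i j, i ≠ j → dist (x i) (x j) = 1)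
    (v : EuclideanSpace ℝ (Fin n)) :
    ‖v‖ ^ 2 / min (n : ℝ) 2 ≤ ∑ j : Fin n, ⟪x 0 - x j.succ, v⟫ ^ 2 := by
  rcases Nat.eq_zero_or_pos n with hn | hn
  · subst hn
    have : ‖v‖ = 0 := by simp [EuclideanSpace.norm_eq]
    simp [this]
  haveI : Nonempty (Fin n) := ⟨⟨0, hn⟩⟩
  set u : Fin n → EuclideanSpace ℝ (Fin n) := fun j => x 0 - x j.succ with hu
  have hnorm1 : ∀ i : Fin n, ‖u i‖ = 1 := by
    intro i
    simpa [hu, dist_eq_norm] using h 0 i.succ (Fin.succ_ne_zero i).symm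
  have gram : ∀ i j : Fin n, ⟪u i, u j⟫ = if i = j then 1 else 1/2 := by
    intro i j
    by_cases hij : i = j
    · subst hij
      rw [if_pos rfl, real_inner_self_eq_norm_sq, hnorm1 i]
      norm_num
    · rw [if_neg hij]
      have h3 : ‖u i - u j‖ = 1 := by
        have e : u i - u j = x j.succ - x i.succ := by simp [hu]
        rw [e, ← dist_eq_norm]
        exact h j.succ i.succ (fun e => hij ((Fin.succ_injective n) e).symm)
      have h4 := norm_sub_sq_real (u i) (u j)
      rw [h3, hnorm1 i, hnorm1 j] at h4
      linarith
  have innersum : ∀ (g : Fin n → ℝ) (k : Fin n),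
      ⟪u k, ∑ i, g i • u i⟫ = (g k + ∑ i, g i) / 2 := by
    intro g k
    rw [inner_sum]
    simp only [real_inner_smul_right, gram]
    have e : ∀ i ∈ Finset.univ, g i * (if k = i then 1 else 1/2)
        = g i / 2 + (if i = k then g i / 2 else 0) := by
      intro i _
      rcases eq_or_ne i k with rfl | hik
      · simp
      · rw [if_neg (Ne.symm hik), if_neg hik]; ring
    rw [Finset.sum_congr rfl e, Finset.sum_add_distrib, Finset.sum_ite_eq',
      if_pos (Finset.mem_univ k), ← Finset.sum_div]
    ring
  have hli : LinearIndependent ℝ u := by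
    rw [Fintype.linearIndependent_iff]
    intro g hg
    have key : ∀ k : Fin n, g k + ∑ i, g i = 0 := by
      intro k
      have h0 : ⟪u k, ∑ i, g i • u i⟫ = 0 := by rw [hg]; simp
      rw [innersum] at h0
      linarith
    have hS : (∑ i, g i) = 0 := by
      have h2 : ∑ k, (g k + ∑ i, g i) = 0 := by simp [key]
      rw [Finset.sum_add_distrib, Finset.sum_const, Finset.card_univ] at h2
      simp only [Fintype.card_fin, nsmul_eq_mul] at h2
      have h3 : (1 + (n:ℝ)) * (∑ i, g i) = 0 := by linarith
      have hn' : (1 + (n:ℝ)) ≠ 0 := by positivity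
      exact (mul_eq_zero.mp h3).resolve_left hn'
    intro k
    have := key k
    rw [hS] at this
    linarith
  have hcard : Fintype.card (Fin n) = Module.finrank ℝ (EuclideanSpace ℝ (Fin n)) := by
    simp
  obtain ⟨b, hcoe⟩ : ∃ b : Module.Basis (Fin n) ℝ (EuclideanSpace ℝ (Fin n)), ⇑b = u :=
    ⟨basisOfLinearIndependentOfCardEqFinrank hli hcard,
      coe_basisOfLinearIndependentOfCardEqFinrank hli hcard⟩
  set c : Fin n → ℝ := fun i => b.repr v i with hc
  have hv : ∑ i, c i • u i = v := by
    rw [hc, ← hcoe]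
    exact b.sum_repr v
  set S : ℝ := ∑ i, c i with hSdef
  have hin : ∀ k : Fin n, ⟪u k, v⟫ = (c k + S) / 2 := by
    intro k
    rw [← hv, innersum]
  have hnv : ‖v‖ ^ 2 = ((∑ i, c i ^ 2) + S ^ 2) / 2 := by
    have step : ‖v‖ ^ 2 = ∑ i, c i * ((c i + S) / 2) := by
      rw [← real_inner_self_eq_norm_sq v]
      nth_rewrite 1 [← hv]
      rw [sum_inner]
      simp only [real_inner_smul_left, hin]
    rw [step]
    have e : ∀ i ∈ Finset.univ, c i * ((c i + S) / 2) = c i ^ 2 / 2 + c i * S / 2 := by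
      intro i _; ring
    rw [Finset.sum_congr rfl e, Finset.sum_add_distrib, ← Finset.sum_div,
      ← Finset.sum_div, ← Finset.sum_mul, ← hSdef]
    ring
  have hsum : ∑ j : Fin n, ⟪x 0 - x j.succ, v⟫ ^ 2
      = ((∑ i, c i ^ 2) + ((n : ℝ) + 2) * S ^ 2) / 4 := by
    have e : ∀ j ∈ Finset.univ, ⟪x 0 - x (Fin.succ j), v⟫ ^ 2
        = c j ^ 2 / 4 + c j * S / 2 + S ^ 2 / 4 := by
      intro j _
      rw [show x 0 - x j.succ = u j from rfl, hin j]
      ring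
    rw [Finset.sum_congr rfl e, Finset.sum_add_distrib, Finset.sum_add_distrib,
      ← Finset.sum_div, ← Finset.sum_div, ← Finset.sum_mul, ← hSdef,
      Finset.sum_const, Finset.card_univ]
    simp only [Fintype.card_fin, nsmul_eq_mul]
    ring
  rw [hnv, hsum]
  have hA : (0:ℝ) ≤ ∑ i, c i ^ 2 := Finset.sum_nonneg fun i _ => sq_nonneg _
  rcases eq_or_lt_of_le (show 1 ≤ n from hn) with h1 | h2
  · -- n = 1
    have hn1 : n = 1 := h1.symm
    subst hn1
    have hAS : (∑ i : Fin 1, c i ^ 2) = S ^ 2 := by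
      rw [hSdef]
      simp [Fin.sum_univ_one]
    rw [hAS]
    have : min ((1:ℕ):ℝ) 2 = 1 := by norm_num
    push_cast
    norm_num
    linarith
  · -- n ≥ 2
    have h2' : (2:ℝ) ≤ (n:ℝ) := by exact_mod_cast h2
    rw [min_eq_right h2']
    rw [div_div]
    rw [div_le_div_iff₀ (by norm_num) (by norm_num)]
    nlinarith [sq_nonneg S]
end

section
/- Let x_0,...,x_{k-1} be the vertices of a regular (k-1)-simplex of side 1 in ℝⁿ, centered at the origin. Then the set S = {x ∈ ℝⁿ : |x - x_i| = 1 for i = 0,...,k-1} equals the intersection of the orthogonal complement of span{x_0,...,x_{k-1}} with the sphere of radius √((k+1)/(2k)) centered at the origin. -/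
open Metric

open RealInnerProductSpace in
theorem sphere_of_equidistant_points (n k : ℕ) (hk : 1 ≤ k) (hkn : k ≤ n)
    (x : Fin k → EuclideanSpace ℝ (Fin n))
    (h : ∀ i j, i ≠ j → dist (x i) (x j) = 1)
    (hsum : ∑ i, x i = 0) :
    {y : EuclideanSpace ℝ (Fin n) | ∀ i, dist y (x i) = 1}
      = ((Submodule.span ℝ (Set.range x))ᗮ : Set (EuclideanSpace ℝ (Fin n)))
          ∩ sphere 0 (Real.sqrt ((k + 1) / (2 * k))) := by
  have hkpos : (0:ℝ) < k := by exact_mod_cast hk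
  have hk0 : (k:ℝ) ≠ 0 := ne_of_gt hkpos
  set T : ℝ := ∑ j, ‖x j‖^2 with hT
  have key : ∀ i, (k:ℝ) * ‖x i‖^2 + T = (k:ℝ) - 1 := by
    intro i
    have hcount : ∑ j, ‖x i - x j‖^2 = (k:ℝ) - 1 := by
      have h1 : ∀ j, ‖x i - x j‖^2 = (1 - if j = i then (1:ℝ) else 0) := by
        intro j
        by_cases hji : j = i
        · simp [hji]
        · rw [← dist_eq_norm, h i j (Ne.symm hji)]
          simp [hji]
      rw [Finset.sum_congr rfl (fun j _ => h1 j), Finset.sum_sub_distrib]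
      simp [Finset.card_univ]
    have h2 : ∑ j, ‖x i - x j‖^2
        = (k:ℝ) * ‖x i‖^2 - 2 * ⟪x i, ∑ j, x j⟫ + T := by
      have h3 : ∀ j, ‖x i - x j‖^2 = ‖x i‖^2 - 2*⟪x i, x j⟫ + ‖x j‖^2 := by
        intro j; rw [@norm_sub_sq_real]
      rw [Finset.sum_congr rfl (fun j _ => h3 j)]
      rw [Finset.sum_add_distrib, Finset.sum_sub_distrib, inner_sum, Finset.mul_sum,
        Finset.sum_const, Finset.card_univ]
      simp [hT, mul_comm]
    rw [hsum, inner_zero_right] at h2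
    rw [h2] at hcount
    linarith
  have hTval : T = ((k:ℝ) - 1) / 2 := by
    have h2 : ∑ i : Fin k, ((k:ℝ)*‖x i‖^2 + T) = (k:ℝ)*((k:ℝ)-1) := by
      rw [Finset.sum_congr rfl (fun i _ => key i), Finset.sum_const, Finset.card_univ]
      simp [mul_sub]
    rw [Finset.sum_add_distrib, ← Finset.mul_sum, ← hT, Finset.sum_const,
      Finset.card_univ] at h2
    simp only [Fintype.card_fin, nsmul_eq_mul] at h2
    have : (k:ℝ) * (2 * T) = (k:ℝ) * ((k:ℝ) - 1) := by ring_nf; ring_nf at h2; linarith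
    have := mul_left_cancel₀ hk0 this
    linarith
  have hnorm : ∀ i, ‖x i‖^2 = ((k:ℝ)-1)/(2*(k:ℝ)) := by
    intro i
    have := key i
    rw [hTval] at this
    field_simp
    linarith
  have hfrac : (0:ℝ) ≤ ((k:ℝ)+1)/(2*(k:ℝ)) := by positivity
  ext y
  simp only [Set.mem_setOf_eq, Set.mem_inter_iff, SetLike.mem_coe, mem_sphere_iff_norm,
    sub_zero]
  constructor
  · intro hy
    have hd : ∀ i, ⟪y, x i⟫ = (‖y‖^2 + ((k:ℝ)-1)/(2*(k:ℝ)) - 1)/2 := by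
      intro i
      have h1 : ‖y - x i‖^2 = 1 := by rw [← dist_eq_norm, hy i]; norm_num
      rw [@norm_sub_sq_real, hnorm i] at h1
      linarith
    have hsum0 : ∑ i, ⟪y, x i⟫ = 0 := by rw [← inner_sum, hsum, inner_zero_right]
    have hks : (k:ℝ) * ((‖y‖^2 + ((k:ℝ)-1)/(2*(k:ℝ)) - 1)/2) = 0 := by
      rw [← hsum0, Finset.sum_congr rfl (fun i _ => hd i), Finset.sum_const,
        Finset.card_univ]
      simp
    have hy2 : ‖y‖^2 = ((k:ℝ)+1)/(2*(k:ℝ)) := by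
      have h5 := (mul_eq_zero.mp hks).resolve_left hk0
      field_simp at h5 ⊢
      linarith
    have hinner0 : ∀ i, ⟪y, x i⟫ = 0 := by
      intro i
      rw [hd i, hy2]
      field_simp
      ring
    constructor
    · rw [Submodule.mem_orthogonal]
      intro u hu
      induction hu using Submodule.span_induction with
      | mem u hu =>
        obtain ⟨i, rfl⟩ := hu
        rw [real_inner_comm]; exact hinner0 i
      | zero => simp
      | add u v _ _ hu hv => rw [inner_add_left, hu, hv]; ring
      | smul a u _ hu => rw [real_inner_smul_left, hu]; ring
    · rw [← Real.sqrt_sq (norm_nonneg y), hy2]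
  · rintro ⟨hmem, hnormy⟩ i
    have hinner0 : ⟪y, x i⟫ = 0 := by
      rw [real_inner_comm]
      exact (Submodule.mem_orthogonal _ _).mp hmem (x i)
        (Submodule.subset_span (Set.mem_range_self i))
    have hy2 : ‖y‖^2 = ((k:ℝ)+1)/(2*(k:ℝ)) := by
      rw [hnormy, Real.sq_sqrt hfrac]
    have hd2 : dist y (x i)^2 = 1 := by
      rw [dist_eq_norm, @norm_sub_sq_real, hnorm i, hy2, hinner0]
      field_simp
      ring
    nlinarith [dist_nonneg (x := y) (y := x i)]
end
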